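/- Let α := lim_{n→∞} c_n/2^n (this limit exists). Then there is a constant K > 0 such that |c_{2m+1}/2^{2m+1} − α(1 + 2^{−m})| ≤ K · 2^{−(3/2)m} for all m ≥ 4. -/

import Mathlib

/-- The Conway number (correlation) `C(A,B)` of two head/tail strings of length `n`,
encoded as functions `Fin n → Bool` (with `H = true`, `T = false`, and 0-indexed
positions): `C(A,B) = ∑_{i=1}^n δ_i 2^{n-i}` where `δ_i = 1` iff `a_{i+j} = b_{1+j}`
for all `j = 0,…,n-i`. -/
def conway {n : ℕ} (A B : Fin n → Bool) : ℕ :=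
  ∑ i : Fin n,
    if (∀ j : Fin n, (i : ℕ) + (j : ℕ) < n → A (i + j) = B j) then 2 ^ (n - 1 - (i : ℕ)) else 0

/-- `cstar m` is the number of head/tail strings of length `m` beginning with `HT`,
ending with `TH`, whose autocorrelation is `2^{m-1} + 1`. -/
def cstar (m : ℕ) : ℕ :=
  Fintype.card {A : Fin m → Bool //
    (∀ i : Fin m, (i : ℕ) = 0 → A i = true) ∧
    (∀ i : Fin m, (i : ℕ) = 1 → A i = false) ∧
    (∀ i : Fin m, (i : ℕ) = m - 2 → A i = false) ∧
    (∀ i : Fin m, (i : ℕ) = m - 1 → A i = true) ∧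
    conway A A = 2 ^ (m - 1) + 1}

/-- `c n = 2 * cstar (n-1)`: by Csirik's characterization, the number of optimal
strategies for Player I in the Penney-Ante game with strings of length `n`. -/
def c (n : ℕ) : ℕ := 2 * cstar (n - 1)

namespace PenneyAux

/-- `f` (restricted to `[0,m)`) has period `p`. -/
def PerN (m p : ℕ) (f : ℕ → Bool) : Prop := ∀ i, i + p < m → f (i + p) = f i

def GoodN (m : ℕ) (f : ℕ → Bool) : Prop :=
  f 0 = true ∧ f 1 = false ∧ f (m-2) = false ∧ f (m-1) = true ∧
    ∀ p, 1 ≤ p → p + 2 ≤ m → ¬ PerN m p f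

abbrev GNt (m : ℕ) : Type := {f : ℕ → Bool // GoodN m f ∧ ∀ i, m ≤ i → f i = false}

instance finite_GNt (m : ℕ) : Finite (GNt m) := by
  have h : Function.Injective (fun f : GNt m => (fun i : Fin m => f.1 i)) := by
    rintro ⟨f, hf⟩ ⟨g, hg⟩ h
    refine Subtype.ext ?_
    show f = g
    funext i
    rcases lt_or_ge i m with hi | hi
    · exact congrFun h ⟨i, hi⟩
    · rw [hf.2 i hi, hg.2 i hi]
  exact Finite.of_injective _ h

lemma perN_mul {m p : ℕ} {f : ℕ → Bool} (hp : PerN m p f) : ∀ t, PerN m (t * p) f := by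
  intro t
  induction t with
  | zero => intro i hi; norm_num
  | succ t ih =>
    intro i hi
    have e : i + (t+1) * p = (i + p) + t * p := by ring
    rw [e]
    have h1 : (i + p) + t * p < m := by rw [← e]; exact hi
    rw [ih _ h1]
    exact hp i (by nlinarith)

lemma per_reduce {m p : ℕ} {f : ℕ → Bool} (h1 : 1 ≤ p) (h2 : p + 2 ≤ m)
    (hp : PerN m p f) : ∃ q, m / 2 ≤ q ∧ q + 2 ≤ m ∧ PerN m q f := by
  rcases le_or_gt (m / 2) p with h | h
  · exact ⟨p, h, h2, hp⟩
  · set t := (m - 2) / p with ht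
    have htp : t * p ≤ m - 2 := by
      rw [ht]; exact Nat.div_mul_le_self _ _
    have hge : m / 2 ≤ t * p := by
      by_contra hlt
      push_neg at hlt
      have : (t + 1) * p ≤ m - 2 := by
        have : t * p + p ≤ m - 2 := by omega
        nlinarith
      have : t + 1 ≤ (m - 2) / p := (Nat.le_div_iff_mul_le (by omega)).2 this
      omega
    exact ⟨t * p, hge, by omega, perN_mul hp t⟩


def del (k : ℕ) (f : ℕ → Bool) : ℕ → Bool := fun i => if i < k then f i else f (i+1)

def ins (k : ℕ) (x : Bool) (f : ℕ → Bool) : ℕ → Bool :=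
  fun i => if i < k then f i else if i = k then x else f (i-1)

def trunc (m : ℕ) (f : ℕ → Bool) : ℕ → Bool := fun i => if i < m then f i else false

lemma del_lt {k i : ℕ} (f : ℕ → Bool) (h : i < k) : del k f i = f i := if_pos h
lemma del_ge {k i : ℕ} (f : ℕ → Bool) (h : k ≤ i) : del k f i = f (i+1) :=
  if_neg (by omega)
lemma ins_lt {k i : ℕ} (x : Bool) (f : ℕ → Bool) (h : i < k) : ins k x f i = f i := if_pos h
lemma ins_eq {k : ℕ} (x : Bool) (f : ℕ → Bool) : ins k x f k = x := by
  simp [ins]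
lemma ins_gt {k i : ℕ} (x : Bool) (f : ℕ → Bool) (h : k < i) : ins k x f i = f (i-1) := by
  simp only [ins]
  rw [if_neg (by omega), if_neg (by omega)]

lemma del_ins (k : ℕ) (x : Bool) (f : ℕ → Bool) : del k (ins k x f) = f := by
  funext i
  rcases lt_or_ge i k with h | h
  · rw [del_lt _ h, ins_lt _ _ h]
  · rw [del_ge _ h, ins_gt _ _ (by omega)]
    simp

lemma ins_del (k : ℕ) (f : ℕ → Bool) : ins k (f k) (del k f) = f := by
  funext i
  rcases lt_trichotomy i k with h | h | h
  · rw [ins_lt _ _ h, del_lt _ h]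
  · rw [h, ins_eq]
  · rw [ins_gt _ _ h, del_ge _ (by omega)]
    congr 1; omega

lemma pad_ins {n k : ℕ} {f : ℕ → Bool} (x : Bool) (hk : k ≤ n)
    (hf : ∀ i, n ≤ i → f i = false) : ∀ i, n + 1 ≤ i → ins k x f i = false := by
  intro i hi
  rw [ins_gt _ _ (by omega)]
  exact hf _ (by omega)

lemma pad_del {n k : ℕ} {f : ℕ → Bool} (hk : k ≤ n)
    (hf : ∀ i, n + 1 ≤ i → f i = false) : ∀ i, n ≤ i → del k f i = false := by
  intro i hi
  rw [del_ge _ (by omega)]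
  exact hf _ (by omega)

/-- Deleting the middle character of a good string of odd length `2k+1`. -/
lemma O1 {k : ℕ} (hk : 2 ≤ k) {f : ℕ → Bool} (hf : GoodN (2*k+1) f) :
    GoodN (2*k) (del k f) := by
  obtain ⟨h0, h1, h2, h3, hper⟩ := hf
  refine ⟨?_, ?_, ?_, ?_, ?_⟩
  · rw [del_lt _ (by omega)]; exact h0
  · rw [del_lt _ (by omega)]; exact h1
  · rw [del_ge _ (by omega), show 2*k-2+1 = 2*k+1-2 by omega]; exact h2
  · rw [del_ge _ (by omega), show 2*k-1+1 = 2*k+1-1 by omega]; exact h3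
  · intro p hp1 hp2 hP
    obtain ⟨q, hq1, hq2, hQ⟩ := per_reduce hp1 hp2 hP
    have hqk : k ≤ q := by omega
    refine hper (q+1) (by omega) (by omega) ?_
    intro i hi
    have hik : i < k := by omega
    rw [show i + (q+1) = (i+q)+1 by omega, ← del_ge f (show k ≤ i+q by omega),
      ← del_lt f hik]
    exact hQ i (by omega)

/-- Inserting any character in the middle of a good string of odd length `2k-1`. -/
lemma E1 {k : ℕ} (hk : 3 ≤ k) {f : ℕ → Bool} (hf : GoodN (2*k-1) f) (x : Bool) :
    GoodN (2*k) (ins k x f) := by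
  obtain ⟨h0, h1, h2, h3, hper⟩ := hf
  refine ⟨?_, ?_, ?_, ?_, ?_⟩
  · rw [ins_lt _ _ (by omega)]; exact h0
  · rw [ins_lt _ _ (by omega)]; exact h1
  · rw [ins_gt _ _ (by omega), show 2*k-2-1 = 2*k-1-2 by omega]; exact h2
  · rw [ins_gt _ _ (by omega)]; exact h3
  · intro p hp1 hp2 hP
    obtain ⟨q, hq1, hq2, hQ⟩ := per_reduce hp1 hp2 hP
    have hqk : k ≤ q := by omega
    rcases eq_or_lt_of_le hqk with hq | hq
    · -- q = k : then f has period k-1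
      subst hq
      refine hper (k-1) (by omega) (by omega) ?_
      intro i hi
      rcases Nat.eq_zero_or_pos i with h0' | h0'
      · subst h0'
        have h5 := hQ (k-1) (by omega)
        rw [ins_gt _ _ (by omega), ins_lt _ _ (by omega)] at h5
        rw [show k-1+k-1 = 2*k-1-1 by omega] at h5
        rw [show 0 + (k-1) = k-1 by omega, ← h5, h3, h0]
      · have h5 := hQ i (by omega)
        rw [ins_gt _ _ (by omega), ins_lt _ _ (by omega)] at h5
        rw [show i + (k-1) = i + k - 1 by omega]
        exact h5
    · -- q ≥ k+1 : f has period q-1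
      refine hper (q-1) (by omega) (by omega) ?_
      intro i hi
      have h5 := hQ i (by omega)
      rw [ins_gt _ _ (by omega), ins_lt _ _ (by omega)] at h5
      rw [show i + (q-1) = i + q - 1 by omega]
      exact h5


/-- The overlapped square `w[:k] ++ w` of a string `w` of length `k+1`. -/
def oA (k : ℕ) (w : ℕ → Bool) : ℕ → Bool :=
  fun i => if i < k then w i else if i ≤ 2*k then w (i - k) else false

lemma oA_lt {k i : ℕ} (w : ℕ → Bool) (h : i < k) : oA k w i = w i := if_pos h
lemma oA_mid {k i : ℕ} (w : ℕ → Bool) (h1 : k ≤ i) (h2 : i ≤ 2*k) :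
    oA k w i = w (i - k) := by
  simp only [oA]; rw [if_neg (by omega), if_pos h2]
lemma oA_hi {k i : ℕ} (w : ℕ → Bool) (h : 2*k < i) : oA k w i = false := by
  simp only [oA]; rw [if_neg (by omega), if_neg (by omega)]

/-- `oA k w` always has period `k` (given the endpoint conditions of `w`). -/
lemma oA_per {k : ℕ} (hk : 2 ≤ k) {w : ℕ → Bool} (hw : GoodN (k+1) w) :
    PerN (2*k+1) k (oA k w) := by
  intro i hi
  have hik : i ≤ k := by omega
  rcases lt_or_ge i k with h | h
  · rw [oA_mid w (by omega) (by omega), oA_lt w h]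
    congr 1; omega
  · have hik' : i = k := by omega
    rw [hik']
    rw [oA_mid w (by omega) (by omega), oA_mid w (by omega) (by omega)]
    have e1 : w k = true := by
      rw [show k = k+1-1 by omega]; exact hw.2.2.2.1
    rw [show k + k - k = k by omega, show k - k = 0 by omega, e1, hw.1]

/-- `oA k w k = true`. -/
lemma oA_k {k : ℕ} {w : ℕ → Bool} (hw : GoodN (k+1) w) : oA k w k = true := by
  rw [oA_mid w le_rfl (by omega), show k - k = 0 by omega, hw.1]

/-- O2: deleting the middle of `oA k w` gives a good string of length `2k`. -/
lemma O2 {k : ℕ} (hk : 2 ≤ k) {w : ℕ → Bool} (hw : GoodN (k+1) w)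
    (hwp : ∀ i, k+1 ≤ i → w i = false) :
    GoodN (2*k) (del k (oA k w)) ∧ ∀ i, 2*k ≤ i → del k (oA k w) i = false := by
  obtain ⟨h0, h1, h2, h3, hper⟩ := hw
  have hBlt : ∀ i, i < k → del k (oA k w) i = w i := fun i h => by
    rw [del_lt _ h, oA_lt w h]
  have hBmid : ∀ i, k ≤ i → i < 2*k → del k (oA k w) i = w (i+1-k) := fun i hi hi2 => by
    rw [del_ge _ hi, oA_mid w (by omega) (by omega)]
  have hBhi : ∀ i, 2*k ≤ i → del k (oA k w) i = false := fun i hi => by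
    rw [del_ge _ (by omega), oA_hi w (by omega)]
  refine ⟨⟨?_, ?_, ?_, ?_, ?_⟩, hBhi⟩
  · rw [hBlt 0 (by omega)]; exact h0
  · rw [hBlt 1 (by omega)]; exact h1
  · rw [hBmid _ (by omega) (by omega), show 2*k-2+1-k = k+1-2 by omega]; exact h2
  · rw [hBmid _ (by omega) (by omega), show 2*k-1+1-k = k+1-1 by omega]; exact h3
  · intro p hp1 hp2 hP
    obtain ⟨q, hq1, hq2, hQ⟩ := per_reduce hp1 hp2 hP
    have hqk : k ≤ q := by omega
    rcases eq_or_lt_of_le hqk with hq | hq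
    · -- q = k : w is constant, contradiction with w 0 = true, w 1 = false
      subst hq
      have e0 : ∀ i, i ≤ k - 1 → w (i+1) = w i := by
        intro i hi
        have h5 := hQ i (by omega)
        rw [hBmid _ (by omega) (by omega), hBlt i (by omega),
          show i + k + 1 - k = i + 1 by omega] at h5
        exact h5
      have := e0 0 (by omega)
      rw [h0, h1] at this
      exact Bool.false_ne_true this
    · -- q ≥ k+1 : w has period q+1-k ∈ [2, k-1]
      refine hper (q+1-k) (by omega) (by omega) ?_
      intro i hi
      have h5 := hQ i (by omega)
      rw [hBmid _ (by omega) (by omega), hBlt i (by omega),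
        show i + q + 1 - k = i + (q+1-k) by omega] at h5
      exact h5

/-- O3: if inserting `x` in the middle of good `B` (length 2k) gives a non-good
string, then the result is `oA k w` for good `w`. -/
lemma O3 {k : ℕ} (hk : 2 ≤ k) {B : ℕ → Bool} (hB : GoodN (2*k) B)
    (hBp : ∀ i, 2*k ≤ i → B i = false) (x : Bool)
    (hng : ¬ GoodN (2*k+1) (ins k x B)) :
    GoodN (k+1) (trunc (k+1) (ins k x B)) ∧ ins k x B = oA k (trunc (k+1) (ins k x B)) := by
  obtain ⟨h0, h1, h2, h3, hper⟩ := hB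
  set A := ins k x B with hA
  have hA0 : A 0 = true := by rw [hA, ins_lt _ _ (by omega)]; exact h0
  have hA1 : A 1 = false := by rw [hA, ins_lt _ _ (by omega)]; exact h1
  have hA2 : A (2*k+1-2) = false := by
    rw [hA, ins_gt _ _ (by omega), show 2*k+1-2-1 = 2*k-2 by omega]; exact h2
  have hA3 : A (2*k+1-1) = true := by
    rw [hA, ins_gt _ _ (by omega), show 2*k+1-1-1 = 2*k-1 by omega]; exact h3
  -- extract a period
  have hex : ∃ p, 1 ≤ p ∧ p + 2 ≤ 2*k+1 ∧ PerN (2*k+1) p A := by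
    by_contra hcon
    push_neg at hcon
    exact hng ⟨hA0, hA1, hA2, hA3, fun p u v => hcon p u v⟩
  obtain ⟨p, hp1, hp2, hP⟩ := hex
  obtain ⟨q, hq1, hq2, hQ⟩ := per_reduce hp1 hp2 hP
  have hqk : k ≤ q := by omega
  -- q must be k, else B would have a period
  have hqeq : q = k := by
    by_contra hne
    have hq : k + 1 ≤ q := by omega
    refine hper (q-1) (by omega) (by omega) ?_
    intro i hi
    have h5 := hQ i (by omega)
    rw [hA, ins_gt _ _ (by omega), ins_lt _ _ (by omega),
      show i + q - 1 = i + (q-1) by omega] at h5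
    exact h5
  rw [hqeq] at hQ
  -- so A has period k
  set w := trunc (k+1) A with hw
  have hwlt : ∀ i, i ≤ k → w i = A i := fun i hi => if_pos (by omega)
  have hwhi : ∀ i, k+1 ≤ i → w i = false := fun i hi => if_neg (by omega)
  have hAk : ∀ i, i ≤ k → A (i + k) = A i := fun i hi => hQ i (by omega)
  have hw0 : w 0 = true := by rw [hwlt 0 (by omega)]; exact hA0
  have hw1 : w 1 = false := by rw [hwlt 1 (by omega)]; exact hA1
  have hw2 : w (k+1-2) = false := by
    rw [hwlt _ (by omega)]
    have := hAk (k-1) (by omega)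
    rw [show k-1+k = 2*k+1-2 by omega] at this
    rw [show k+1-2 = k-1 by omega, ← this]
    exact hA2
  have hw3 : w (k+1-1) = true := by
    rw [hwlt _ (by omega), show k+1-1 = k by omega]
    have := hAk 0 (by omega)
    rw [show 0+k = k by omega] at this
    rw [this]; exact hA0
  have hwper : ∀ r, 1 ≤ r → r + 2 ≤ k+1 → ¬ PerN (k+1) r w := by
    intro r hr1 hr2 hR
    refine hper (k+r-1) (by omega) (by omega) ?_
    intro i hi
    have hik : i + r ≤ k := by omega
    have c1 : B i = w i := by
      rw [hwlt i (by omega), hA, ins_lt _ _ (by omega)]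
    have c2 : B (i + (k+r-1)) = A (i + k + r) := by
      rw [hA, ins_gt _ _ (by omega)]
      congr 1; omega
    rw [c1, c2, show i + k + r = (i+r) + k by omega, hAk (i+r) hik,
      ← hwlt (i+r) hik, hR i (by omega)]
  refine ⟨⟨hw0, hw1, hw2, hw3, hwper⟩, ?_⟩
  funext i
  rcases lt_or_ge i k with h | h
  · rw [oA_lt w h, hwlt i (by omega)]
  · rcases le_or_gt i (2*k) with h' | h'
    · rw [oA_mid w h h', hwlt (i-k) (by omega)]
      have := hAk (i-k) (by omega)
      rw [show i-k+k = i by omega] at this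
      exact this
    · rw [oA_hi w h', hA, ins_gt _ _ (by omega)]
      exact hBp _ (by omega)


/-- `w ++ [F] ++ w[1:]` for `w` of length `k`. -/
def eA (k : ℕ) (w : ℕ → Bool) : ℕ → Bool :=
  fun i => if i < k then w i else if i = k then false else if i < 2*k then w (i-k) else false

lemma eA_lt {k i : ℕ} (w : ℕ → Bool) (h : i < k) : eA k w i = w i := if_pos h
lemma eA_k {k : ℕ} (w : ℕ → Bool) : eA k w k = false := by
  simp [eA]
lemma eA_mid {k i : ℕ} (w : ℕ → Bool) (h1 : k < i) (h2 : i < 2*k) :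
    eA k w i = w (i - k) := by
  simp only [eA]; rw [if_neg (by omega), if_neg (by omega), if_pos h2]
lemma eA_hi {k i : ℕ} (w : ℕ → Bool) (h : 2*k ≤ i) : eA k w i = false := by
  simp only [eA]
  rw [if_neg (show ¬ i < k by omega)]
  rcases eq_or_ne i k with h' | h'
  · rw [if_pos h']
  · rw [if_neg h', if_neg (show ¬ i < 2*k by omega)]

/-- E2: `eA k w` is good of length `2k`, with padding, and its middle-deletion
has period `k-1` (so is not good). -/
lemma E2 {k : ℕ} (hk : 3 ≤ k) {w : ℕ → Bool} (hw : GoodN k w)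
    (hwp : ∀ i, k ≤ i → w i = false) :
    GoodN (2*k) (eA k w) ∧ (∀ i, 2*k ≤ i → eA k w i = false)
      ∧ PerN (2*k-1) (k-1) (del k (eA k w)) := by
  obtain ⟨h0, h1, h2, h3, hper⟩ := hw
  refine ⟨⟨?_, ?_, ?_, ?_, ?_⟩, fun i hi => eA_hi w hi, ?_⟩
  · rw [eA_lt w (by omega)]; exact h0
  · rw [eA_lt w (by omega)]; exact h1
  · rw [eA_mid w (by omega) (by omega), show 2*k-2-k = k-2 by omega]; exact h2
  · rw [eA_mid w (by omega) (by omega), show 2*k-1-k = k-1 by omega]; exact h3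
  · intro p hp1 hp2 hP
    obtain ⟨q, hq1, hq2, hQ⟩ := per_reduce hp1 hp2 hP
    have hqk : k ≤ q := by omega
    rcases eq_or_lt_of_le hqk with hq | hq
    · -- q = k : contradiction at i = 0
      have h5 := hQ 0 (by omega)
      rw [← hq, show 0 + k = k by omega, eA_k, eA_lt w (by omega), h0] at h5
      exact Bool.false_ne_true h5
    · -- q ≥ k+1 : w has period q-k ∈ [1, k-2]
      refine hper (q-k) (by omega) (by omega) ?_
      intro i hi
      have h5 := hQ i (by omega)
      rw [eA_mid w (by omega) (by omega), eA_lt w (by omega),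
        show i + q - k = i + (q-k) by omega] at h5
      exact h5
  · -- del k (eA k w) has period k-1
    intro i hi
    have hik : i ≤ k - 1 := by omega
    have c1 : del k (eA k w) i = w i := by
      rw [del_lt _ (by omega), eA_lt w (by omega)]
    rcases Nat.eq_zero_or_pos i with h0' | h0'
    · subst h0'
      have c2 : del k (eA k w) (0 + (k-1)) = w (k-1) := by
        rw [show 0 + (k-1) = k-1 by omega, del_lt _ (by omega), eA_lt w (by omega)]
      rw [c1, c2, h0, show k-1 = k-1 by omega]
      exact h3
    · have c2 : del k (eA k w) (i + (k-1)) = w i := by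
        rw [del_ge _ (by omega), show i + (k-1) + 1 = i + k by omega,
          eA_mid w (by omega) (by omega), show i + k - k = i by omega]
      rw [c1, c2]

/-- E3: a good string of even length `2k` whose middle-deletion is not good
must be `eA k w` for a good `w`. -/
lemma E3 {k : ℕ} (hk : 3 ≤ k) {A : ℕ → Bool} (hA : GoodN (2*k) A)
    (hAp : ∀ i, 2*k ≤ i → A i = false)
    (hng : ¬ GoodN (2*k-1) (del k A)) :
    GoodN k (trunc k A) ∧ A = eA k (trunc k A) := by
  obtain ⟨h0, h1, h2, h3, hper⟩ := hA
  have hB0 : del k A 0 = true := by rw [del_lt _ (by omega)]; exact h0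
  have hB1 : del k A 1 = false := by rw [del_lt _ (by omega)]; exact h1
  have hB2 : del k A (2*k-1-2) = false := by
    rw [del_ge _ (by omega), show 2*k-1-2+1 = 2*k-2 by omega]; exact h2
  have hB3 : del k A (2*k-1-1) = true := by
    rw [del_ge _ (by omega), show 2*k-1-1+1 = 2*k-1 by omega]; exact h3
  have hex : ∃ p, 1 ≤ p ∧ p + 2 ≤ 2*k-1 ∧ PerN (2*k-1) p (del k A) := by
    by_contra hcon
    push_neg at hcon
    exact hng ⟨hB0, hB1, hB2, hB3, fun p u v => hcon p u v⟩
  obtain ⟨p, hp1, hp2, hP⟩ := hex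
  obtain ⟨q, hq1, hq2, hQ⟩ := per_reduce hp1 hp2 hP
  have hqk : k - 1 ≤ q := by omega
  have hqeq : q = k - 1 := by
    by_contra hne
    have hq : k ≤ q := by omega
    refine hper (q+1) (by omega) (by omega) ?_
    intro i hi
    have h5 := hQ i (by omega)
    rw [del_ge _ (by omega), del_lt _ (by omega), show i + q + 1 = i + (q+1) by omega] at h5
    exact h5
  rw [hqeq] at hQ
  -- key relation : A (i+k) = A i for 1 ≤ i ≤ k-1
  have hrel : ∀ i, 1 ≤ i → i ≤ k - 1 → A (i + k) = A i := by
    intro i hi1 hi2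
    have h5 := hQ i (by omega)
    rw [del_ge _ (by omega), del_lt _ (by omega), show i + (k-1) + 1 = i + k by omega] at h5
    exact h5
  have hAk1 : A (k-1) = true := by
    have h5 := hQ 0 (by omega)
    rw [del_lt _ (by omega), del_lt _ (by omega), show 0 + (k-1) = k-1 by omega] at h5
    rw [h5]; exact h0
  have hAkf : A k = false := by
    by_contra hne
    have hAt : A k = true := by
      cases hx : A k
      · exact absurd hx hne
      · rfl
    refine hper k (by omega) (by omega) ?_
    intro i hi
    rcases Nat.eq_zero_or_pos i with h0' | h0'
    · subst h0'
      rw [show 0 + k = k by omega, hAt, h0]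
    · exact hrel i h0' (by omega)
  set w := trunc k A with hwdef
  have hwlt : ∀ i, i < k → w i = A i := fun i hi => if_pos hi
  have hwhi : ∀ i, k ≤ i → w i = false := fun i hi => if_neg (by omega)
  have hw0 : w 0 = true := by rw [hwlt 0 (by omega)]; exact h0
  have hw1 : w 1 = false := by rw [hwlt 1 (by omega)]; exact h1
  have hw2 : w (k-2) = false := by
    rw [hwlt _ (by omega)]
    have := hrel (k-2) (by omega) (by omega)
    rw [show k-2+k = 2*k-2 by omega] at this
    rw [← this]; exact h2
  have hw3 : w (k-1) = true := by rw [hwlt _ (by omega)]; exact hAk1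
  have hwper : ∀ r, 1 ≤ r → r + 2 ≤ k → ¬ PerN k r w := by
    intro r hr1 hr2 hR
    refine hper (k+r) (by omega) (by omega) ?_
    intro i hi
    have hir : i + r ≤ k - 1 := by omega
    have c1 : A (i + (k+r)) = A (i+r) := by
      rw [show i + (k+r) = (i+r) + k by omega]
      exact hrel (i+r) (by omega) hir
    rw [c1, ← hwlt (i+r) (by omega), hR i (by omega), hwlt i (by omega)]
  refine ⟨⟨hw0, hw1, hw2, hw3, hwper⟩, ?_⟩
  funext i
  rcases lt_or_ge i k with h | h
  · rw [eA_lt w h, hwlt i h]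
  · rcases eq_or_lt_of_le h with h' | h'
    · rw [← h', eA_k]; exact hAkf
    · rcases lt_or_ge i (2*k) with h'' | h''
      · rw [eA_mid w h' h'', hwlt (i-k) (by omega)]
        have := hrel (i-k) (by omega) (by omega)
        rw [show i-k+k = i by omega] at this
        exact this
      · rw [eA_hi w h'']
        exact hAp i h''


lemma oA_recon {k : ℕ} {w : ℕ → Bool} (hw : GoodN (k+1) w) :
    ins k true (del k (oA k w)) = oA k w := by
  have := ins_del k (oA k w)
  rwa [oA_k hw] at this

lemma GNt_ext {m : ℕ} {f g : GNt m} (h : f.1 = g.1) : f = g := Subtype.ext h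

lemma trunc_oA {k : ℕ} {w : ℕ → Bool} (hw : GoodN (k+1) w)
    (hwp : ∀ i, k+1 ≤ i → w i = false) : trunc (k+1) (oA k w) = w := by
  funext i
  rcases lt_or_ge i (k+1) with h | h
  · rcases lt_or_ge i k with h' | h'
    · rw [show trunc (k+1) (oA k w) i = oA k w i from if_pos h, oA_lt w h']
    · have hik : i = k := by omega
      rw [show trunc (k+1) (oA k w) i = oA k w i from if_pos h, hik, oA_k hw]
      have e1 : w (k+1-1) = true := hw.2.2.2.1
      rw [show k+1-1 = k by omega] at e1
      rw [e1]
  · rw [show trunc (k+1) (oA k w) i = false from if_neg (by omega), hwp i h]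

/-- The odd-length bijection: `GNt (2k+1) ⊕ GNt (k+1) ≃ GNt (2k) × Bool`. -/
lemma card_O {k : ℕ} (hk : 2 ≤ k) :
    Nat.card (GNt (2*k+1)) + Nat.card (GNt (k+1)) = 2 * Nat.card (GNt (2*k)) := by
  classical
  set Θ : GNt (2*k+1) ⊕ GNt (k+1) → GNt (2*k) × Bool := Sum.elim
    (fun A => (⟨del k A.1, O1 hk A.2.1, pad_del (Nat.le_mul_of_pos_left k (by omega)) A.2.2⟩,
        A.1 k))
    (fun w => (⟨del k (oA k w.1), (O2 hk w.2.1 w.2.2).1, (O2 hk w.2.1 w.2.2).2⟩, true))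
    with hΘ
  have hinj : Function.Injective Θ := by
    rintro (A | w) (A' | w') h <;>
      rw [hΘ] at h <;>
      simp only [Sum.elim_inl, Sum.elim_inr, Prod.mk.injEq, Subtype.mk.injEq,
        and_true, true_and] at h
    · obtain ⟨h1, h2⟩ := h
      have : A.1 = A'.1 := by
        rw [← ins_del k A.1, ← ins_del k A'.1, h1, h2]
      exact congrArg Sum.inl (GNt_ext this)
    · exfalso
      obtain ⟨h1, h2⟩ := h
      have : A.1 = oA k w'.1 := by
        rw [← ins_del k A.1, h2, h1, oA_recon w'.2.1]
      have hperA := A.2.1.2.2.2.2 k (by omega) (by omega)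
      rw [this] at hperA
      exact hperA (oA_per hk w'.2.1)
    · exfalso
      obtain ⟨h1, h2⟩ := h
      have : A'.1 = oA k w.1 := by
        rw [← ins_del k A'.1, ← h2, ← h1, oA_recon w.2.1]
      have hperA := A'.2.1.2.2.2.2 k (by omega) (by omega)
      rw [this] at hperA
      exact hperA (oA_per hk w.2.1)
    · have h1 : del k (oA k w.1) = del k (oA k w'.1) := h
      have : oA k w.1 = oA k w'.1 := by
        rw [← oA_recon w.2.1, ← oA_recon w'.2.1, h1]
      have : w.1 = w'.1 := by
        rw [← trunc_oA w.2.1 w.2.2, ← trunc_oA w'.2.1 w'.2.2, this]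
      exact congrArg Sum.inr (GNt_ext this)
  have hsurj : Function.Surjective Θ := by
    rintro ⟨B, x⟩
    by_cases hG : GoodN (2*k+1) (ins k x B.1)
    · refine ⟨.inl ⟨ins k x B.1, hG, pad_ins x (Nat.le_mul_of_pos_left k (by omega)) B.2.2⟩, ?_⟩
      rw [hΘ]
      simp only [Sum.elim_inl]
      rw [Prod.mk.injEq]
      exact ⟨GNt_ext (del_ins k x B.1), ins_eq x B.1⟩
    · obtain ⟨hwg, he⟩ := O3 hk B.2.1 B.2.2 x hG
      refine ⟨.inr ⟨trunc (k+1) (ins k x B.1), hwg, fun i hi => if_neg (by omega)⟩, ?_⟩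
      rw [hΘ]
      simp only [Sum.elim_inr]
      rw [Prod.mk.injEq]
      constructor
      · refine GNt_ext ?_
        show del k (oA k (trunc (k+1) (ins k x B.1))) = B.1
        rw [← he, del_ins]
      · have := congrFun he k
        rw [ins_eq, oA_k hwg] at this
        exact this.symm
  have e := Nat.card_congr (Equiv.ofBijective Θ ⟨hinj, hsurj⟩)
  rw [Nat.card_sum, Nat.card_prod] at e
  have hb : Nat.card Bool = 2 := by
    rw [Nat.card_eq_fintype_card, Fintype.card_bool]
  rw [e, hb]
  ring


lemma trunc_eA {k : ℕ} {w : ℕ → Bool}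
    (hwp : ∀ i, k ≤ i → w i = false) : trunc k (eA k w) = w := by
  funext i
  rcases lt_or_ge i k with h | h
  · rw [show trunc k (eA k w) i = eA k w i from if_pos h, eA_lt w h]
  · rw [show trunc k (eA k w) i = false from if_neg (by omega), hwp i h]

/-- The even-length bijection: `GNt (2k-1) × Bool ⊕ GNt k ≃ GNt (2k)`. -/
lemma card_E {k : ℕ} (hk : 3 ≤ k) :
    Nat.card (GNt (2*k)) = 2 * Nat.card (GNt (2*k-1)) + Nat.card (GNt k) := by
  classical
  set Φ : GNt (2*k-1) × Bool ⊕ GNt k → GNt (2*k) := Sum.elim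
    (fun p => ⟨ins k p.2 p.1.1, E1 hk p.1.2.1 p.2,
      fun i hi => pad_ins p.2 (show k ≤ 2*k-1 by omega) p.1.2.2 i (by omega)⟩)
    (fun w => ⟨eA k w.1, (E2 hk w.2.1 w.2.2).1, (E2 hk w.2.1 w.2.2).2.1⟩)
    with hΦ
  have hinj : Function.Injective Φ := by
    rintro (⟨B, x⟩ | w) (⟨B', x'⟩ | w') h <;>
      rw [hΦ] at h <;>
      simp only [Sum.elim_inl, Sum.elim_inr, Subtype.mk.injEq] at h
    · have hx : x = x' := by
        have := congrFun h k
        rwa [ins_eq, ins_eq] at this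
      have hB : B.1 = B'.1 := by
        rw [← del_ins k x B.1, ← del_ins k x' B'.1, h]
      exact congrArg Sum.inl (Prod.ext (GNt_ext hB) hx)
    · exfalso
      have hper := (E2 hk w'.2.1 w'.2.2).2.2
      rw [← h, del_ins] at hper
      exact B.2.1.2.2.2.2 (k-1) (by omega) (by omega) hper
    · exfalso
      have hper := (E2 hk w.2.1 w.2.2).2.2
      rw [h, del_ins] at hper
      exact B'.2.1.2.2.2.2 (k-1) (by omega) (by omega) hper
    · have : w.1 = w'.1 := by
        rw [← trunc_eA w.2.2, ← trunc_eA w'.2.2, h]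
      exact congrArg Sum.inr (GNt_ext this)
  have hsurj : Function.Surjective Φ := by
    intro A
    by_cases hG : GoodN (2*k-1) (del k A.1)
    · refine ⟨.inl (⟨del k A.1, hG,
        fun i hi => pad_del (show k ≤ 2*k-1 by omega)
          (fun j hj => A.2.2 j (by omega)) i hi⟩, A.1 k), ?_⟩
      rw [hΦ]
      simp only [Sum.elim_inl]
      exact GNt_ext (ins_del k A.1)
    · obtain ⟨hwg, he⟩ := E3 hk A.2.1 A.2.2 hG
      refine ⟨.inr ⟨trunc k A.1, hwg, fun i hi => if_neg (by omega)⟩, ?_⟩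
      rw [hΦ]
      simp only [Sum.elim_inr]
      exact GNt_ext he.symm
  have e := Nat.card_congr (Equiv.ofBijective Φ ⟨hinj, hsurj⟩)
  rw [Nat.card_sum, Nat.card_prod] at e
  have hb : Nat.card Bool = 2 := by
    rw [Nat.card_eq_fintype_card, Fintype.card_bool]
  rw [← e, hb]
  ring


def fext {m : ℕ} (A : Fin m → Bool) : ℕ → Bool :=
  fun i => if h : i < m then A ⟨i, h⟩ else false

lemma fext_lt {m : ℕ} (A : Fin m → Bool) {i : ℕ} (h : i < m) : fext A i = A ⟨i, h⟩ :=
  dif_pos h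

lemma fext_ge {m : ℕ} (A : Fin m → Bool) {i : ℕ} (h : m ≤ i) : fext A i = false :=
  dif_neg (by omega)

lemma D_iff {m : ℕ} (A : Fin m → Bool) (i : Fin m) :
    (∀ j : Fin m, (i : ℕ) + (j : ℕ) < m → A (i + j) = A j) ↔ PerN m (i : ℕ) (fext A) := by
  constructor
  · intro hD n hn
    have hnm : n < m := by omega
    rw [fext_lt A (show n + (i:ℕ) < m by omega), fext_lt A hnm]
    have := hD ⟨n, hnm⟩ (by simpa using (by omega : (i:ℕ) + n < m))
    convert this using 2
    apply Fin.ext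
    simp only [Fin.val_add]
    rw [Nat.mod_eq_of_lt (by omega)]
    omega
  · intro hP j hj
    have := hP (j : ℕ) (by omega)
    rw [fext_lt A (show (j:ℕ) + (i:ℕ) < m by omega), fext_lt A j.isLt] at this
    convert this using 2
    apply Fin.ext
    simp only [Fin.val_add]
    rw [Nat.mod_eq_of_lt (by omega)]
    omega

lemma conway_char {m : ℕ} (hm : 3 ≤ m) (A : Fin m → Bool)
    (h0 : fext A 0 = true) (h3 : fext A (m-1) = true) :
    (conway A A = 2^(m-1) + 1 ↔ ∀ p, 1 ≤ p → p + 2 ≤ m → ¬ PerN m p (fext A)) := by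
  classical
  have hm0 : 0 < m := by omega
  have hsum : conway A A =
      ∑ i : Fin m, (if PerN m (i : ℕ) (fext A) then 2 ^ (m - 1 - (i : ℕ)) else 0) := by
    rw [conway]
    refine Finset.sum_congr rfl (fun i _ => ?_)
    exact if_congr (D_iff A i) rfl rfl
  have hz : ((⟨0, hm0⟩ : Fin m) : ℕ) = 0 := rfl
  have hy : ((⟨m-1, by omega⟩ : Fin m) : ℕ) = m - 1 := rfl
  constructor
  · intro hc p hp1 hp2 hP
    have hpm : p < m := by omega
    have hne : (⟨0, hm0⟩ : Fin m) ≠ (⟨p, hpm⟩ : Fin m) := by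
      intro hcon
      have := congrArg Fin.val hcon
      simp only [hz] at this
      omega
    have hle : (∑ x ∈ ({(⟨0, hm0⟩ : Fin m), ⟨p, hpm⟩} : Finset (Fin m)),
        if PerN m (x : ℕ) (fext A) then 2 ^ (m - 1 - (x : ℕ)) else 0) ≤ conway A A := by
      rw [hsum]
      exact Finset.sum_le_sum_of_subset (Finset.subset_univ _)
    rw [Finset.sum_pair hne] at hle
    have hP0 : PerN m ((⟨0, hm0⟩ : Fin m) : ℕ) (fext A) := by
      rw [hz]; intro n hn; norm_num
    have hPp : PerN m ((⟨p, hpm⟩ : Fin m) : ℕ) (fext A) := hP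
    rw [if_pos hP0, if_pos hPp, hz] at hle
    have h2 : (2:ℕ) ^ 1 ≤ 2 ^ (m - 1 - ((⟨p, hpm⟩ : Fin m) : ℕ)) := by
      apply Nat.pow_le_pow_right (by omega)
      show 1 ≤ m - 1 - p
      omega
    rw [hc] at hle
    norm_num at h2
    have h1 : (2:ℕ)^(m-1-0) = 2^(m-1) := by norm_num
    have hvp : ((⟨p, hpm⟩ : Fin m) : ℕ) = p := rfl
    rw [h1, hvp] at hle
    omega
  · intro hnp
    rw [hsum]
    have hsplit : ∀ i : Fin m,
        (if PerN m (i : ℕ) (fext A) then 2 ^ (m - 1 - (i : ℕ)) else 0) =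
        (if i = (⟨0, hm0⟩ : Fin m) then 2^(m-1) else 0) +
        (if i = (⟨m-1, by omega⟩ : Fin m) then 1 else 0) := by
      intro i
      rcases Nat.eq_zero_or_pos (i : ℕ) with h | h
      · have hieq : i = (⟨0, hm0⟩ : Fin m) := Fin.ext (by rw [hz]; exact h)
        have hne2 : i ≠ (⟨m-1, by omega⟩ : Fin m) := by
          intro hcon
          have := congrArg Fin.val hcon
          rw [hy] at this
          omega
        have hP0 : PerN m (i : ℕ) (fext A) := by
          rw [h]; intro n hn; norm_num
        rw [if_pos hP0, if_pos hieq, if_neg hne2, h]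
        norm_num
      · rcases lt_or_ge (i : ℕ) (m-1) with h' | h'
        · have hne1 : i ≠ (⟨0, hm0⟩ : Fin m) := by
            intro hcon; have := congrArg Fin.val hcon; rw [hz] at this; omega
          have hne2 : i ≠ (⟨m-1, by omega⟩ : Fin m) := by
            intro hcon; have := congrArg Fin.val hcon; rw [hy] at this; omega
          rw [if_neg (hnp (i : ℕ) (by omega) (by omega)), if_neg hne1, if_neg hne2]
        · have hieq : (i : ℕ) = m - 1 := by have := i.isLt; omega
          have hieq' : i = (⟨m-1, by omega⟩ : Fin m) := Fin.ext (by rw [hy]; exact hieq)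
          have hne1 : i ≠ (⟨0, hm0⟩ : Fin m) := by
            intro hcon; have := congrArg Fin.val hcon; rw [hz] at this; omega
          have hPm : PerN m (i : ℕ) (fext A) := by
            rw [hieq]
            intro n hn
            have hn0 : n = 0 := by omega
            subst hn0
            rw [Nat.zero_add, h3, h0]
          rw [if_pos hPm, if_pos hieq', if_neg hne1, hieq]
          norm_num
    rw [Finset.sum_congr rfl (fun i _ => hsplit i), Finset.sum_add_distrib,
      Finset.sum_ite_eq' Finset.univ, Finset.sum_ite_eq' Finset.univ]
    simp

lemma cstar_eq {m : ℕ} (hm : 3 ≤ m) : cstar m = Nat.card (GNt m) := by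
  classical
  rw [cstar, ← Nat.card_eq_fintype_card]
  apply Nat.card_congr
  have hm0 : 0 < m := by omega
  have toGood : ∀ A : {A : Fin m → Bool //
      (∀ i : Fin m, (i : ℕ) = 0 → A i = true) ∧
      (∀ i : Fin m, (i : ℕ) = 1 → A i = false) ∧
      (∀ i : Fin m, (i : ℕ) = m - 2 → A i = false) ∧
      (∀ i : Fin m, (i : ℕ) = m - 1 → A i = true) ∧
      conway A A = 2 ^ (m - 1) + 1},
      GoodN m (fext A.1) ∧ ∀ i, m ≤ i → fext A.1 i = false := by
    rintro ⟨A, c0, c1, c2, c3, cc⟩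
    have e0 : fext A 0 = true := by rw [fext_lt A hm0]; exact c0 _ rfl
    have e1 : fext A 1 = false := by rw [fext_lt A (by omega)]; exact c1 _ rfl
    have e2 : fext A (m-2) = false := by rw [fext_lt A (by omega)]; exact c2 _ rfl
    have e3 : fext A (m-1) = true := by rw [fext_lt A (by omega)]; exact c3 _ rfl
    exact ⟨⟨e0, e1, e2, e3, (conway_char hm A e0 e3).1 cc⟩, fun i hi => fext_ge A hi⟩
  refine Equiv.ofBijective (fun A => ⟨fext A.1, toGood A⟩) ⟨?_, ?_⟩
  · rintro A A' h
    apply Subtype.ext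
    funext i
    have h' : fext A.1 = fext A'.1 := congrArg Subtype.val h
    have := congrFun h' (i : ℕ)
    rw [fext_lt A.1 i.isLt, fext_lt A'.1 i.isLt] at this
    simpa using this
  · rintro ⟨f, ⟨g0, g1, g2, g3, gper⟩, gpad⟩
    set A : Fin m → Bool := fun i => f (i : ℕ) with hA
    have hfe : fext A = f := by
      funext i
      rcases lt_or_ge i m with h | h
      · rw [fext_lt A h]
      · rw [fext_ge A h, gpad i h]
    have e0 : fext A 0 = true := by rw [hfe]; exact g0
    have e3 : fext A (m-1) = true := by rw [hfe]; exact g3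
    refine ⟨⟨A, ?_, ?_, ?_, ?_, ?_⟩, ?_⟩
    · intro i hi; show f (i:ℕ) = true; rw [hi]; exact g0
    · intro i hi; show f (i:ℕ) = false; rw [hi]; exact g1
    · intro i hi; show f (i:ℕ) = false; rw [hi]; exact g2
    · intro i hi; show f (i:ℕ) = true; rw [hi]; exact g3
    · exact (conway_char hm A e0 e3).2 (by rw [hfe]; exact gper)
    · exact Subtype.ext hfe

/-- Csirik's odd recurrence. -/
theorem cstar_rec_odd {k : ℕ} (hk : 2 ≤ k) :
    cstar (2*k+1) + cstar (k+1) = 2 * cstar (2*k) := by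
  rw [cstar_eq (show 3 ≤ 2*k+1 by omega), cstar_eq (show 3 ≤ k+1 by omega),
    cstar_eq (show 3 ≤ 2*k by omega)]
  exact card_O hk

/-- Csirik's even recurrence. -/
theorem cstar_rec_even {k : ℕ} (hk : 3 ≤ k) :
    cstar (2*k) = 2 * cstar (2*k-1) + cstar k := by
  rw [cstar_eq (show 3 ≤ 2*k by omega), cstar_eq (show 3 ≤ 2*k-1 by omega),
    cstar_eq (show 3 ≤ k by omega)]
  exact card_E hk


section Analysis
open Filter

noncomputable def q : ℝ := (Real.sqrt 2)⁻¹

lemma q_pos : 0 < q := inv_pos.2 (Real.sqrt_pos.2 (by norm_num))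

lemma q_sq : q^2 = 1/2 := by
  rw [q, inv_pow, Real.sq_sqrt (by norm_num : (0:ℝ) ≤ 2)]
  norm_num

lemma q_le : q ≤ 3/4 := by
  have h1 := q_sq
  have h2 := q_pos
  nlinarith

lemma q_lt_one : q < 1 := lt_of_le_of_lt q_le (by norm_num)

lemma q_cube_le : q^3 ≤ 3/4 := by
  have h1 : q^3 ≤ 1^3 := pow_le_pow_left₀ (le_of_lt q_pos) (le_of_lt q_lt_one) 3
  have h2 := q_sq
  have h3 := q_pos
  nlinarith

noncomputable def sv (n : ℕ) : ℝ := (cstar n : ℝ) / 2^n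

lemma cstar_le (n : ℕ) : cstar n ≤ 2^n := by
  rw [cstar]
  calc Fintype.card _ ≤ Fintype.card (Fin n → Bool) := Fintype.card_subtype_le _
  _ = 2^n := by simp

lemma sv_nonneg (n : ℕ) : 0 ≤ sv n := by
  unfold sv; positivity

lemma sv_le_one (n : ℕ) : sv n ≤ 1 := by
  unfold sv
  rw [div_le_one (by positivity)]
  exact_mod_cast cstar_le n

lemma q_two_mul (k : ℕ) : q^(2*k) = ((2:ℝ)^k)⁻¹ := by
  rw [pow_mul, q_sq, one_div, inv_pow]

lemma hrec1 {k : ℕ} (hk : 2 ≤ k) : sv (2*k) = sv (2*k+1) + sv (k+1) * q^(2*k) := by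
  have hc : ((cstar (2*k+1) : ℝ)) + (cstar (k+1) : ℝ) = 2 * (cstar (2*k) : ℝ) := by
    exact_mod_cast cstar_rec_odd hk
  have hpow : (2:ℝ)^(2*k+1) = 2^(k+1) * 2^k := by
    rw [← pow_add]; congr 1; omega
  have hpow2 : (2:ℝ)^(2*k+1) = 2^(2*k) * 2 := pow_succ 2 (2*k)
  unfold sv
  rw [q_two_mul, ← div_eq_mul_inv, div_div, ← hpow, ← add_div, hc, hpow2,
    show (2:ℝ)^(2*k)*2 = 2*2^(2*k) by ring,
    mul_div_mul_left _ _ (by norm_num : (2:ℝ) ≠ 0)]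

lemma hrec2 {k : ℕ} (hk : 3 ≤ k) : sv (2*k) = sv (2*k-1) + sv k * q^(2*k) := by
  have hc : ((cstar (2*k) : ℝ)) = 2 * (cstar (2*k-1) : ℝ) + (cstar k : ℝ) := by
    exact_mod_cast cstar_rec_even hk
  have hpow : (2:ℝ)^(2*k) = 2^(2*k-1) * 2 := by
    rw [← pow_succ]; congr 1; omega
  have hpow2 : (2:ℝ)^(2*k) = 2^k * 2^k := by rw [← pow_add]; congr 1; omega
  unfold sv
  rw [q_two_mul, ← div_eq_mul_inv, div_div, ← hpow2, hc, add_div, hpow]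
  congr 1
  rw [show (2:ℝ)^(2*k-1)*2 = 2*2^(2*k-1) by ring,
    mul_div_mul_left _ _ (by norm_num : (2:ℝ) ≠ 0)]


lemma q_pow_mono {a b : ℕ} (h : a ≤ b) : q^b ≤ q^a :=
  pow_le_pow_of_le_one (le_of_lt q_pos) (le_of_lt q_lt_one) h

lemma hinc {n : ℕ} (hn : 5 ≤ n) : |sv n - sv (n-1)| ≤ q^(n-1) := by
  rcases Nat.even_or_odd n with ⟨k, hk⟩ | ⟨k, hk⟩
  · -- n = 2k, k ≥ 3
    subst hk
    have hk3 : 3 ≤ k := by omega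
    have h := hrec2 hk3
    rw [show k + k = 2*k by ring] at *
    have : sv (2*k) - sv (2*k-1) = sv k * q^(2*k) := by linarith
    rw [show 2*k - 1 = 2*k-1 from rfl, this, abs_of_nonneg (mul_nonneg (sv_nonneg _) (pow_nonneg q_pos.le _))]
    calc sv k * q^(2*k) ≤ 1 * q^(2*k) := by
          apply mul_le_mul_of_nonneg_right (sv_le_one k) (pow_nonneg q_pos.le _)
    _ = q^(2*k) := one_mul _
    _ ≤ q^(2*k-1) := q_pow_mono (by omega)
  · -- n = 2k+1, k ≥ 2
    subst hk
    have hk2 : 2 ≤ k := by omega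
    have h := hrec1 hk2
    have : sv (2*k+1) - sv (2*k+1-1) = -(sv (k+1) * q^(2*k)) := by
      rw [show 2*k+1-1 = 2*k by omega]
      linarith
    rw [this, abs_neg, abs_of_nonneg (mul_nonneg (sv_nonneg _) (pow_nonneg q_pos.le _)), show 2*k+1-1 = 2*k by omega]
    calc sv (k+1) * q^(2*k) ≤ 1 * q^(2*k) := by
          apply mul_le_mul_of_nonneg_right (sv_le_one (k+1)) (pow_nonneg q_pos.le _)
    _ = q^(2*k) := one_mul _

lemma geo_le {r : ℝ} (h0 : 0 ≤ r) (h1 : r < 1) (N : ℕ) :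
    ∑ t ∈ Finset.range N, r^t ≤ (1-r)⁻¹ := by
  have h2 : (0:ℝ) < 1 - r := by linarith
  have h3 : ∑ t ∈ Finset.range N, r^t = (1 - r^N)/(1-r) := by
    rw [geom_sum_eq (by intro hc; rw [hc] at h1; linarith) N]
    rw [div_eq_div_iff (by intro hc; nlinarith [hc]; ) (ne_of_gt h2)]
    ring
  rw [h3, div_le_iff₀ h2, inv_mul_cancel₀ (ne_of_gt h2)]
  nlinarith [pow_nonneg h0 N]

lemma tele {n : ℕ} (hn : 4 ≤ n) (N : ℕ) :
    |sv n - sv (n+N)| ≤ ∑ t ∈ Finset.range N, q^(n+t) := by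
  induction N with
  | zero => simp
  | succ N ih =>
    have h1 : |sv n - sv (n+(N+1))| ≤ |sv n - sv (n+N)| + |sv (n+N) - sv (n+N+1)| := by
      have := abs_sub_le (sv n) (sv (n+N)) (sv (n+N+1))
      rw [show n+(N+1) = n+N+1 by ring]
      exact this
    have h2 : |sv (n+N) - sv (n+N+1)| ≤ q^(n+N) := by
      have := hinc (n := n+N+1) (by omega)
      rw [show n+N+1-1 = n+N by omega] at this
      rw [abs_sub_comm]
      exact this
    rw [Finset.sum_range_succ]
    calc |sv n - sv (n+(N+1))| ≤ |sv n - sv (n+N)| + |sv (n+N) - sv (n+N+1)| := h1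
    _ ≤ (∑ t ∈ Finset.range N, q^(n+t)) + q^(n+N) := add_le_add ih h2

lemma tele_bound {n : ℕ} (hn : 4 ≤ n) (N : ℕ) : |sv n - sv (n+N)| ≤ 4 * q^n := by
  refine (tele hn N).trans ?_
  have h1 : ∑ t ∈ Finset.range N, q^(n+t) = q^n * ∑ t ∈ Finset.range N, q^t := by
    rw [Finset.mul_sum]
    exact Finset.sum_congr rfl (fun t _ => by rw [pow_add])
  rw [h1]
  have h2 : ∑ t ∈ Finset.range N, q^t ≤ (1-q)⁻¹ := geo_le (le_of_lt q_pos) q_lt_one N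
  have h3 : (1-q)⁻¹ ≤ 4 := by
    rw [inv_le_comm₀ (by nlinarith [q_le]) (by norm_num)]
    nlinarith [q_le]
  calc q^n * ∑ t ∈ Finset.range N, q^t ≤ q^n * 4 := by
        apply mul_le_mul_of_nonneg_left (h2.trans h3) (pow_nonneg q_pos.le _)
  _ = 4 * q^n := by ring


lemma habs {α : ℝ} (hs : Tendsto sv atTop (nhds α)) {n : ℕ} (hn : 4 ≤ n) :
    |sv n - α| ≤ 4 * q^n := by
  have h1 : Tendsto (fun N : ℕ => n + N) atTop atTop :=
    tendsto_atTop_mono (fun N => by simp only [id_eq]; omega) tendsto_id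
  have hlim : Tendsto (fun N => sv (n+N)) atTop (nhds α) := hs.comp h1
  have habs' : Tendsto (fun N => |sv n - sv (n+N)|) atTop (nhds |sv n - α|) :=
    (tendsto_const_nhds.sub hlim).abs
  exact le_of_tendsto habs' (Filter.Eventually.of_forall (fun N => tele_bound hn N))

lemma hodd3 {m : ℕ} (hm : 3 ≤ m) : |sv (2*m+3) - sv (2*m+1)| ≤ q^(3*m+3) := by
  have h1 := hrec1 (k := m+1) (by omega)
  have h2 := hrec2 (k := m+1) (by omega)
  rw [show 2*(m+1) = 2*m+2 by ring] at h1 h2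
  rw [show 2*m+2+1 = 2*m+3 by ring] at h1
  rw [show 2*m+2-1 = 2*m+1 by omega] at h2
  have h3 : sv (2*m+3) - sv (2*m+1) = (sv (m+1) - sv (m+2)) * q^(2*m+2) := by
    linear_combination h2 - h1
  rw [h3, abs_mul, abs_of_nonneg (pow_nonneg q_pos.le _)]
  have h4 : |sv (m+1) - sv (m+2)| ≤ q^(m+1) := by
    have h5 := hinc (n := m+2) (by omega)
    rw [show m+2-1 = m+1 by omega] at h5
    rw [abs_sub_comm]
    exact h5
  calc |sv (m+1) - sv (m+2)| * q^(2*m+2) ≤ q^(m+1) * q^(2*m+2) :=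
        mul_le_mul_of_nonneg_right h4 (pow_nonneg q_pos.le _)
  _ = q^(3*m+3) := by rw [← pow_add]; congr 1; ring

lemma oddtele {m : ℕ} (hm : 3 ≤ m) (N : ℕ) :
    |sv (2*m+1) - sv (2*(m+N)+1)| ≤ ∑ t ∈ Finset.range N, q^(3*(m+t)+3) := by
  induction N with
  | zero => simp
  | succ N ih =>
    have h1 : |sv (2*m+1) - sv (2*(m+(N+1))+1)| ≤
        |sv (2*m+1) - sv (2*(m+N)+1)| + |sv (2*(m+N)+1) - sv (2*(m+N)+3)| := by
      have := abs_sub_le (sv (2*m+1)) (sv (2*(m+N)+1)) (sv (2*(m+N)+3))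
      rw [show 2*(m+(N+1))+1 = 2*(m+N)+3 by ring]
      exact this
    have h2 : |sv (2*(m+N)+1) - sv (2*(m+N)+3)| ≤ q^(3*(m+N)+3) := by
      rw [abs_sub_comm]
      exact hodd3 (by omega)
    rw [Finset.sum_range_succ]
    exact h1.trans (add_le_add ih h2)

lemma odd_bound {α : ℝ} (hs : Tendsto sv atTop (nhds α)) {m : ℕ} (hm : 3 ≤ m) :
    |sv (2*m+1) - α| ≤ 4 * q^(3*m) := by
  have h1 : Tendsto (fun N : ℕ => 2*(m+N)+1) atTop atTop :=
    tendsto_atTop_mono (fun N => by simp only [id_eq]; omega) tendsto_id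
  have hlim : Tendsto (fun N => sv (2*(m+N)+1)) atTop (nhds α) := hs.comp h1
  have habs' : Tendsto (fun N => |sv (2*m+1) - sv (2*(m+N)+1)|) atTop
      (nhds |sv (2*m+1) - α|) := (tendsto_const_nhds.sub hlim).abs
  refine le_of_tendsto habs' (Filter.Eventually.of_forall (fun N => ?_))
  refine (oddtele hm N).trans ?_
  have h2 : ∀ t : ℕ, q^(3*(m+t)+3) = q^(3*m+3) * (q^3)^t := by
    intro t
    rw [← pow_mul, ← pow_add]
    congr 1; ring
  rw [Finset.sum_congr rfl (fun t _ => h2 t), ← Finset.mul_sum]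
  have h3 : ∑ t ∈ Finset.range N, (q^3)^t ≤ (1-q^3)⁻¹ :=
    geo_le (pow_nonneg q_pos.le 3) (pow_lt_one₀ q_pos.le q_lt_one (by norm_num)) N
  have h4 : (1-q^3)⁻¹ ≤ 4 := by
    rw [inv_le_comm₀ (by nlinarith [q_cube_le]) (by norm_num)]
    nlinarith [q_cube_le]
  calc q^(3*m+3) * ∑ t ∈ Finset.range N, (q^3)^t ≤ q^(3*m+3) * 4 :=
        mul_le_mul_of_nonneg_left (h3.trans h4) (pow_nonneg q_pos.le _)
  _ ≤ 4 * q^(3*m) := by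
      have := q_pow_mono (show 3*m ≤ 3*m+3 by omega)
      nlinarith [pow_nonneg q_pos.le (3*m+3)]

lemma q_rpow (m : ℕ) : q^(3*m) = (2:ℝ)^(-(3/2:ℝ)*(m:ℝ)) := by
  have hq : q = (2:ℝ)^(-(1/2:ℝ)) := by
    rw [q, Real.rpow_neg (by norm_num), Real.sqrt_eq_rpow]
  rw [hq, ← Real.rpow_natCast ((2:ℝ)^(-(1/2:ℝ))) (3*m), ← Real.rpow_mul (by norm_num)]
  congr 1
  push_cast
  ring

theorem dn_aux (α : ℝ)
    (hα : Tendsto (fun n : ℕ => (c n : ℝ) / 2 ^ n) atTop (nhds α)) :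
    ∃ K : ℝ, 0 < K ∧ ∀ m : ℕ, 4 ≤ m →
      |(c (2 * m + 1) : ℝ) / 2 ^ (2 * m + 1) - α * (1 + (2 : ℝ) ^ (-(m : ℝ)))| ≤
        K * (2 : ℝ) ^ (-(3 / 2 : ℝ) * (m : ℝ)) := by
  have hsv : ∀ n : ℕ, sv n = (c (n+1) : ℝ)/2^(n+1) := by
    intro n
    rw [c, show n+1-1 = n from rfl]
    unfold sv
    push_cast
    rw [pow_succ, show (2:ℝ)^n*2 = 2*2^n by ring,
      mul_div_mul_left _ _ (by norm_num : (2:ℝ) ≠ 0)]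
  have hs : Tendsto sv atTop (nhds α) := by
    have h1 := hα.comp (tendsto_add_atTop_nat 1)
    exact Tendsto.congr (fun n => (hsv n).symm) h1
  refine ⟨8, by norm_num, fun m hm => ?_⟩
  have hL : (c (2*m+1) : ℝ)/2^(2*m+1) = sv (2*m) := (hsv (2*m)).symm
  have hrpow1 : (2:ℝ) ^ (-(m:ℝ)) = q^(2*m) := by
    rw [q_two_mul, ← Real.rpow_natCast (2:ℝ) m, ← Real.rpow_neg (by norm_num)]
  have hdec : sv (2*m) - α*(1 + q^(2*m)) = (sv (2*m+1) - α) + (sv (m+1) - α) * q^(2*m) := by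
    rw [hrec1 (show 2 ≤ m by omega)]
    ring
  have hb1 : |sv (2*m+1) - α| ≤ 4 * q^(3*m) := odd_bound hs (by omega)
  have hb2 : |sv (m+1) - α| ≤ 4 * q^(m+1) := habs hs (by omega)
  calc |(c (2*m+1) : ℝ)/2^(2*m+1) - α * (1 + (2:ℝ)^(-(m:ℝ)))|
      = |(sv (2*m+1) - α) + (sv (m+1) - α) * q^(2*m)| := by rw [hL, hrpow1, hdec]
  _ ≤ |sv (2*m+1) - α| + |sv (m+1) - α| * q^(2*m) := by
      refine (abs_add_le _ _).trans ?_
      rw [abs_mul, abs_of_nonneg (pow_nonneg q_pos.le _)]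
  _ ≤ 4*q^(3*m) + (4*q^(m+1)) * q^(2*m) :=
      add_le_add hb1 (mul_le_mul_of_nonneg_right hb2 (pow_nonneg q_pos.le _))
  _ ≤ 8 * q^(3*m) := by
      have h1 : q^(m+1) * q^(2*m) = q^(3*m+1) := by rw [← pow_add]; congr 1; ring
      have h2 : q^(3*m+1) ≤ q^(3*m) := q_pow_mono (by omega)
      nlinarith
  _ = 8 * (2:ℝ)^(-(3/2:ℝ)*(m:ℝ)) := by rw [q_rpow]

end Analysis

end PenneyAux


open Filter in
/-- If `α = lim c_n / 2^n`, then `|c_{2m+1}/2^{2m+1} - α(1 + 2^{-m})| ≤ K · 2^{-(3/2)m}`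
for all `m ≥ 4`, for some constant `K > 0`. -/
theorem dn_asymptotic_odd (α : ℝ)
    (hα : Tendsto (fun n : ℕ => (c n : ℝ) / 2 ^ n) atTop (nhds α)) :
    ∃ K : ℝ, 0 < K ∧ ∀ m : ℕ, 4 ≤ m →
      |(c (2 * m + 1) : ℝ) / 2 ^ (2 * m + 1) - α * (1 + (2 : ℝ) ^ (-(m : ℝ)))| ≤
        K * (2 : ℝ) ^ (-(3 / 2 : ℝ) * (m : ℝ)) :=
  PenneyAux.dn_aux α hα
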